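/- arXiv:1306.3727 — 4 statements merged into one kernel-verified Lean document; each statement's English description precedes it below -/
import Mathlib

section
/- Let ζ be the permutation on {1,…,3n} defined by ζ(3k+1)=3k+2, ζ(3k+2)=3k+3, ζ(3k+3)=3k+1 (0 ≤ k ≤ n−1). For a fixed block {3k+1, 3k+2, 3k+3}, suppose S is a set of pairs chosen so that each pair is either (i, i) (representing match (wᵢ, aᵢ, bᵢ)) or (i, ζ(i)) (representing match (w̄ᵢ, aᵢ, b_{ζ(i)})) with exactly one pair per first coordinate i ∈ {3k+1,3k+2,3k+3}, and such that every second coordinate in the block appears exactly once. Then either all three pairs are of the form (i,i), or all three are of the form (i, ζ(i)). -/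
/-- Within one block {3k+1, 3k+2, 3k+3}, if each index i chooses either the pair
(i, i) (match (wᵢ, aᵢ, bᵢ), encoded `c i = true`) or the pair (i, ζ(i))
(match (w̄ᵢ, aᵢ, b_{ζ(i)}), encoded `c i = false`), and every second coordinate in the
block appears exactly once, then all three choices agree. -/
theorem block_all_true_or_all_false (n k : ℕ) (hk : k < n) (ζ : ℕ → ℕ)
    (hζ1 : ∀ k', ζ (3 * k' + 1) = 3 * k' + 2)
    (hζ2 : ∀ k', ζ (3 * k' + 2) = 3 * k' + 3)
    (hζ3 : ∀ k', ζ (3 * k' + 3) = 3 * k' + 1)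
    (c : ℕ → Bool)
    (hbij : ∀ j ∈ ({3 * k + 1, 3 * k + 2, 3 * k + 3} : Finset ℕ),
      ∃! i, i ∈ ({3 * k + 1, 3 * k + 2, 3 * k + 3} : Finset ℕ) ∧
        (if c i then i else ζ i) = j) :
    (∀ i ∈ ({3 * k + 1, 3 * k + 2, 3 * k + 3} : Finset ℕ), c i = true) ∨
    (∀ i ∈ ({3 * k + 1, 3 * k + 2, 3 * k + 3} : Finset ℕ), c i = false) := by
  simp only [Finset.mem_insert, Finset.mem_singleton] at hbij ⊢
  have ha := hζ1 k
  have hb := hζ2 k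
  have hd := hζ3 k
  cases hca : c (3 * k + 1) <;> cases hcb : c (3 * k + 2) <;> cases hcd : c (3 * k + 3)
  all_goals first
    | (left; rintro i (rfl | rfl | rfl) <;> assumption)
    | (right; rintro i (rfl | rfl | rfl) <;> assumption)
    | (exfalso
       first
        | (obtain ⟨i, ⟨hi, hfi⟩, -⟩ := hbij (3 * k + 1) (by omega)
           rcases hi with rfl | rfl | rfl <;>
             simp [hca, hcb, hcd, ha, hb, hd] at hfi <;> omega)
        | (obtain ⟨i, ⟨hi, hfi⟩, -⟩ := hbij (3 * k + 2) (by omega)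
           rcases hi with rfl | rfl | rfl <;>
             simp [hca, hcb, hcd, ha, hb, hd] at hfi <;> omega)
        | (obtain ⟨i, ⟨hi, hfi⟩, -⟩ := hbij (3 * k + 3) (by omega)
           rcases hi with rfl | rfl | rfl <;>
             simp [hca, hcb, hcd, ha, hb, hd] at hfi <;> omega))
end

section
/- Let φ be a CNF formula and let φ′ be obtained from φ by Tovey's transformation: for each variable z occurring d ≥ 2 times, replace its occurrences with fresh variables z₁,…,z_d and add the implication-cycle clauses (z₁ ∨ ¬z₂), …, (z_d ∨ ¬z₁); for each variable occurring once, add the tautological clause (z ∨ ¬z). Then φ′ is satisfiable if and only if φ is satisfiable, and every variable of φ′ occurs exactly three times in φ′. -/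
/-- A CNF formula over variables `V`: a list of clauses, each a list of literals
(a variable together with a polarity). -/
abbrev CNF (V : Type) := List (List (V × Bool))

/-- An assignment satisfies a CNF formula if every clause contains a true literal. -/
def Satisfies {V : Type} (σ : V → Bool) (φ : CNF V) : Prop :=
  ∀ c ∈ φ, ∃ l ∈ c, σ l.1 = l.2

/-- Rename the literals of one clause, giving each occurrence of a variable `z`
the fresh copy `(z, j)` where `j` is the number of earlier occurrences of `z`
(recorded in the counter `cnt`). Returns the renamed clause and updated counter. -/
def renameClause : (ℕ → ℕ) → List (ℕ × Bool) → List ((ℕ × ℕ) × Bool) × (ℕ → ℕ)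
  | cnt, [] => ([], cnt)
  | cnt, l :: ls =>
      let rest := renameClause (Function.update cnt l.1 (cnt l.1 + 1)) ls
      (((l.1, cnt l.1), l.2) :: rest.1, rest.2)

/-- Rename all clauses of a CNF formula, threading the occurrence counter. -/
def renameCNF : (ℕ → ℕ) → CNF ℕ → CNF (ℕ × ℕ) × (ℕ → ℕ)
  | cnt, [] => ([], cnt)
  | cnt, c :: cs =>
      let rc := renameClause cnt c
      let rest := renameCNF rc.2 cs
      (rc.1 :: rest.1, rest.2)

/-- Number of occurrences of variable `z` in φ (as a positive or negative literal). -/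
def occCount (φ : CNF ℕ) (z : ℕ) : ℕ := (φ.flatten.map Prod.fst).count z

/-- The added clauses for a variable `z` with `d` occurrences: the tautological
clause (z ∨ ¬z) if `d ≤ 1`, and otherwise the implication cycle
(z₁ ∨ ¬z₂), (z₂ ∨ ¬z₃), …, (z_d ∨ ¬z₁). -/
def cycleClauses (z d : ℕ) : CNF (ℕ × ℕ) :=
  if d ≤ 1 then [[((z, 0), true), ((z, 0), false)]]
  else (List.range d).map fun j => [((z, j), true), ((z, (j + 1) % d), false)]

/-- Tovey's transformation: replace each occurrence of each variable by a fresh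
copy and append the cycle clauses for each variable. -/
def tovey (φ : CNF ℕ) : CNF (ℕ × ℕ) :=
  (renameCNF (fun _ => 0) φ).1 ++
    ((φ.flatten.map Prod.fst).dedup.flatMap fun z => cycleClauses z (occCount φ z))

/-- Number of occurrences of a variable in the transformed formula. -/
def occCount' (ψ : CNF (ℕ × ℕ)) (v : ℕ × ℕ) : ℕ := (ψ.flatten.map Prod.fst).count v

lemma renameClause_snd (c : List (ℕ × Bool)) : ∀ cnt z,
    (renameClause cnt c).2 z = cnt z + (c.map Prod.fst).count z := by
  induction c with
  | nil => simp [renameClause]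
  | cons l ls ih =>
    intro cnt z
    simp only [renameClause, ih, List.map_cons, List.count_cons]
    by_cases h : l.1 = z <;> simp [Function.update, h] <;> omega


lemma renameCNF_snd (φ : CNF ℕ) : ∀ cnt z,
    (renameCNF cnt φ).2 z = cnt z + occCount φ z := by
  induction φ with
  | nil => simp [renameCNF, occCount]
  | cons c cs ih =>
    intro cnt z
    simp only [renameCNF, ih, renameClause_snd, occCount, List.flatten_cons,
      List.map_append, List.count_append]
    omega


lemma renameClause_count (c : List (ℕ × Bool)) : ∀ cnt z j,
    (((renameClause cnt c).1).map Prod.fst).count (z, j) =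
      if cnt z ≤ j ∧ j < cnt z + (c.map Prod.fst).count z then 1 else 0 := by
  induction c with
  | nil =>
    intro cnt z j
    simp only [renameClause, List.map_nil, List.count_nil]
    split_ifs <;> omega
  | cons l ls ih =>
    intro cnt z j
    simp only [renameClause, List.map_cons, List.count_cons, ih]
    by_cases h : l.1 = z
    · subst h
      simp only [Function.update_self, Prod.mk.injEq, beq_iff_eq]
      by_cases hj : cnt l.1 = j ∧ true = true <;> split_ifs <;> simp_all <;> omega
    · have h1 : Function.update cnt l.1 (cnt l.1 + 1) z = cnt z := by
        simp [Function.update_of_ne (Ne.symm h)]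
      have hne : ((l.1, cnt l.1) == (z, j)) = false := by
        simp [Prod.ext_iff]; intro hc; exact absurd hc h
      rw [h1, hne]
      simp only [Bool.false_eq_true, if_false, beq_iff_eq, h, if_false]
      split_ifs <;> omega


lemma renameCNF_count (φ : CNF ℕ) : ∀ cnt z j,
    (((renameCNF cnt φ).1.flatten).map Prod.fst).count (z, j) =
      if cnt z ≤ j ∧ j < cnt z + occCount φ z then 1 else 0 := by
  induction φ with
  | nil =>
    intro cnt z j
    simp only [renameCNF, occCount, List.flatten_nil, List.map_nil, List.count_nil]
    split_ifs <;> omega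
  | cons c cs ih =>
    intro cnt z j
    simp only [renameCNF, List.flatten_cons, List.map_append, List.count_append,
      renameClause_count, ih, renameClause_snd]
    have : occCount (c :: cs) z = (c.map Prod.fst).count z + occCount cs z := by
      simp [occCount, List.count_append]
    rw [this]
    split_ifs <;> omega


lemma count_map_pair (z : ℕ) (l : List ℕ) (j : ℕ) :
    List.count ((z, j) : ℕ × ℕ) (l.map fun i => (z, i)) = l.count j := by
  induction l with
  | nil => simp
  | cons a l ih =>
    simp only [List.map_cons, List.count_cons, ih, beq_iff_eq, Prod.mk.injEq, true_and]


lemma count_flatMap_pair {α β : Type*} [BEq β] (l : List α) (f g : α → β) (v : β) :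
    ((l.flatMap fun i => [f i, g i]).count v) = (l.map f).count v + (l.map g).count v := by
  induction l with
  | nil => simp
  | cons a l ih =>
    simp only [List.flatMap_cons, List.map_cons, List.count_cons, List.count_append, ih,
      List.count_cons, List.count_nil]
    omega


lemma range_succ_mod_perm (d : ℕ) (hd : 1 ≤ d) :
    ((List.range d).map fun i => (i + 1) % d).Perm (List.range d) := by
  have he : ((List.range d).map fun i => (i + 1) % d) = (List.range d).rotate 1 := by
    apply List.ext_getElem
    · simp
    · intro i h1 h2
      simp [List.getElem_rotate]
  rw [he]
  exact List.rotate_perm _ _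


lemma cycle_vars (z d : ℕ) : ∀ v ∈ (cycleClauses z d).flatten.map Prod.fst,
    v.1 = z ∧ v.2 < max d 1 := by
  intro v hv
  unfold cycleClauses at hv
  split at hv
  · simp at hv
    simp [hv]
  · rename_i h
    simp only [List.mem_map, List.mem_flatten] at hv
    obtain ⟨l, ⟨c, hc, hl⟩, rfl⟩ := hv
    simp only [List.mem_map, List.mem_range] at hc
    obtain ⟨i, hi, rfl⟩ := hc
    simp only [List.mem_cons, List.not_mem_nil, or_false] at hl
    rcases hl with rfl | rfl
    · simp; omega
    · refine ⟨rfl, ?_⟩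
      simp only []
      have := Nat.mod_lt (i + 1) (show 0 < d by omega)
      omega


lemma cycle_count (z d : ℕ) (hd : 1 ≤ d) (j : ℕ) (hj : j < d) :
    ((cycleClauses z d).flatten.map Prod.fst).count (z, j) = 2 := by
  unfold cycleClauses
  split
  · rename_i h
    have : d = 1 := by omega
    subst this
    have : j = 0 := by omega
    subst this
    simp
  · rename_i h
    have h2 : 2 ≤ d := by omega
    have hflat : ((((List.range d).map fun i =>
        [((z, i), true), ((z, (i + 1) % d), false)]).flatten).map Prod.fst)
        = (List.range d).flatMap fun i => [(z, i), (z, (i + 1) % d)] := by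
      rw [← List.flatMap_def, List.map_flatMap]
      rfl
    rw [hflat]
    have key := count_flatMap_pair (List.range d) (fun i => ((z, i) : ℕ × ℕ))
      (fun i => (z, (i + 1) % d)) (z, j)
    have c1 : ((List.range d).map fun i => (z, i)).count (z, j) = 1 := by
      rw [count_map_pair]
      exact List.count_eq_one_of_mem List.nodup_range (List.mem_range.2 hj)
    have c2 : ((List.range d).map fun i => (z, (i + 1) % d)).count (z, j) = 1 := by
      have e : ((List.range d).map fun i => (z, (i + 1) % d))
          = (((List.range d).map fun i => (i + 1) % d).map fun i => (z, i)) := by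
        simp [List.map_map, Function.comp]
      rw [e, count_map_pair, (range_succ_mod_perm d hd).count_eq]
      exact List.count_eq_one_of_mem List.nodup_range (List.mem_range.2 hj)
    rw [c1, c2] at key
    exact key


lemma satisfies_append {V : Type} (σ : V → Bool) (a b : CNF V) :
    Satisfies σ (a ++ b) ↔ Satisfies σ a ∧ Satisfies σ b := by
  simp only [Satisfies, List.mem_append, or_imp, forall_and]


lemma satisfies_congr {V : Type} {σ σ' : V → Bool} (ψ : CNF V)
    (h : ∀ v ∈ ψ.flatten.map Prod.fst, σ v = σ' v) (hs : Satisfies σ ψ) :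
    Satisfies σ' ψ := by
  intro c hc
  obtain ⟨l, hl, hv⟩ := hs c hc
  refine ⟨l, hl, ?_⟩
  rw [← h l.1 (List.mem_map_of_mem (List.mem_flatten.2 ⟨c, hc, hl⟩)), hv]


lemma renameClause_sat (c : List (ℕ × Bool)) : ∀ cnt (σ' : ℕ × ℕ → Bool) (τ : ℕ → Bool),
    (∀ z j, σ' (z, j) = τ z) →
    ((∃ l ∈ (renameClause cnt c).1, σ' l.1 = l.2) ↔ (∃ l ∈ c, τ l.1 = l.2)) := by
  induction c with
  | nil => simp [renameClause]
  | cons l ls ih =>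
    intro cnt σ' τ h
    simp only [renameClause]
    rw [List.exists_mem_cons_iff, List.exists_mem_cons_iff, ih _ σ' τ h]
    simp only [h]


lemma renameCNF_sat (φ : CNF ℕ) : ∀ cnt (σ' : ℕ × ℕ → Bool) (τ : ℕ → Bool),
    (∀ z j, σ' (z, j) = τ z) →
    (Satisfies σ' (renameCNF cnt φ).1 ↔ Satisfies τ φ) := by
  induction φ with
  | nil => simp [renameCNF, Satisfies]
  | cons c cs ih =>
    intro cnt σ' τ h
    simp only [renameCNF, Satisfies, List.mem_cons, forall_eq_or_imp]
    rw [renameClause_sat c cnt σ' τ h]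
    constructor
    · rintro ⟨h1, h2⟩
      exact ⟨h1, (ih _ σ' τ h).1 h2⟩
    · rintro ⟨h1, h2⟩
      exact ⟨h1, (ih _ σ' τ h).2 h2⟩


lemma cycle_sat (σ' : ℕ × ℕ → Bool) (τ : ℕ → Bool) (h : ∀ z j, σ' (z, j) = τ z) (z d : ℕ) :
    Satisfies σ' (cycleClauses z d) := by
  unfold cycleClauses
  split
  · intro c hc
    simp only [List.mem_singleton] at hc
    subst hc
    cases hτ : τ z
    · exact ⟨((z, 0), false), by simp, by rw [h]; exact hτ⟩
    · exact ⟨((z, 0), true), by simp, by rw [h]; exact hτ⟩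
  · intro c hc
    simp only [List.mem_map, List.mem_range] at hc
    obtain ⟨i, hi, rfl⟩ := hc
    cases hτ : τ z
    · exact ⟨((z, (i + 1) % d), false), by simp, by rw [h]; exact hτ⟩
    · exact ⟨((z, i), true), by simp, by rw [h]; exact hτ⟩


lemma cycle_forces (σ' : ℕ × ℕ → Bool) (z d : ℕ)
    (hs : Satisfies σ' (cycleClauses z d)) :
    ∀ j < d, σ' (z, j) = σ' (z, 0) := by
  rcases Nat.lt_or_ge d 2 with h2 | h2
  · intro j hj
    have : j = 0 := by omega
    subst this; rfl
  · have H : ∀ i < d, σ' (z, (i + 1) % d) = true → σ' (z, i) = true := by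
      intro i hi htr
      have hmem : [((z, i), true), ((z, (i + 1) % d), false)] ∈ cycleClauses z d := by
        unfold cycleClauses
        rw [if_neg (by omega)]
        exact List.mem_map.2 ⟨i, List.mem_range.2 hi, rfl⟩
      obtain ⟨l, hl, hv⟩ := hs _ hmem
      simp only [List.mem_cons, List.not_mem_nil, or_false] at hl
      rcases hl with rfl | rfl
      · exact hv
      · rw [htr] at hv; cases hv
    have step : ∀ m j, j < d → σ' (z, (j + m) % d) = true → σ' (z, j) = true := by
      intro m
      induction m with
      | zero => intro j hj ht; rwa [Nat.add_zero, Nat.mod_eq_of_lt hj] at ht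
      | succ m ihm =>
        intro j hj ht
        apply ihm j hj
        apply H ((j + m) % d) (Nat.mod_lt _ (by omega))
        have e : ((j + m) % d + 1) % d = (j + (m + 1)) % d := by
          rw [← Nat.add_assoc, Nat.add_mod (j + m) 1 d,
            Nat.mod_eq_of_lt (show (1 : ℕ) < d by omega)]
        rw [e]; exact ht
    intro j hj
    cases h0 : σ' (z, 0) with
    | false =>
      cases hjv : σ' (z, j) with
      | false => rfl
      | true =>
        have := step j 0 (by omega) (by rwa [Nat.zero_add, Nat.mod_eq_of_lt hj])
        rw [h0] at this; exact this.symm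
    | true =>
      exact step (d - j) j hj
        (by rw [Nat.add_sub_cancel' (le_of_lt hj), Nat.mod_self]; exact h0)


lemma count_cycles (φ : CNF ℕ) (v : ℕ × ℕ) : ∀ L : List ℕ, L.Nodup →
    (((L.flatMap fun z => cycleClauses z (occCount φ z)).flatten.map Prod.fst).count v) =
      if v.1 ∈ L then
        ((cycleClauses v.1 (occCount φ v.1)).flatten.map Prod.fst).count v else 0 := by
  intro L
  induction L with
  | nil => simp
  | cons a L ih =>
    intro hnd
    rw [List.flatMap_cons, List.flatten_append, List.map_append, List.count_append,
      ih (List.nodup_cons.1 hnd).2]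
    by_cases h : v.1 = a
    · have hna : v.1 ∉ L := h ▸ (List.nodup_cons.1 hnd).1
      rw [if_neg hna, if_pos (by simp [h]), h, Nat.add_zero]
    · have h0 : ((cycleClauses a (occCount φ a)).flatten.map Prod.fst).count v = 0 := by
        rw [List.count_eq_zero]
        intro hv
        exact h (cycle_vars a _ v hv).1
      rw [h0]
      simp only [List.mem_cons, h, false_or, Nat.zero_add]


lemma mem_dedup_iff_occ (φ : CNF ℕ) (z : ℕ) :
    z ∈ (φ.flatten.map Prod.fst).dedup ↔ 0 < occCount φ z := by
  rw [List.mem_dedup, occCount, List.count_pos_iff]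


/-- Tovey's transformation preserves satisfiability, and every variable of the
resulting formula occurs exactly three times. -/
theorem tovey_equisat_and_three_occurrences (φ : CNF ℕ) :
    ((∃ σ, Satisfies σ (tovey φ)) ↔ (∃ σ, Satisfies σ φ)) ∧
    ∀ v ∈ (tovey φ).flatten.map Prod.fst, occCount' (tovey φ) v = 3 := by
  set A := (renameCNF (fun _ => 0) φ).1 with hA
  set B := ((φ.flatten.map Prod.fst).dedup.flatMap fun z => cycleClauses z (occCount φ z))
    with hB
  have hvarsplit : (tovey φ).flatten.map Prod.fst =
      A.flatten.map Prod.fst ++ B.flatten.map Prod.fst := by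
    rw [tovey, List.flatten_append, List.map_append]
  have hcountA : ∀ v : ℕ × ℕ, (A.flatten.map Prod.fst).count v =
      if v.2 < occCount φ v.1 then 1 else 0 := by
    intro v
    have := renameCNF_count φ (fun _ => 0) v.1 v.2
    simpa using this
  have hcountB : ∀ v : ℕ × ℕ, (B.flatten.map Prod.fst).count v =
      if v.1 ∈ (φ.flatten.map Prod.fst).dedup then
        ((cycleClauses v.1 (occCount φ v.1)).flatten.map Prod.fst).count v else 0 :=
    fun v => count_cycles φ v _ (List.nodup_dedup _)
  -- every variable of tovey φ has index below its occurrence count, which is positive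
  have hvars : ∀ v ∈ (tovey φ).flatten.map Prod.fst,
      v.2 < occCount φ v.1 ∧ 0 < occCount φ v.1 := by
    intro v hv
    rw [hvarsplit, List.mem_append] at hv
    rcases hv with hv | hv
    · have := List.count_pos_iff.2 hv
      rw [hcountA] at this
      by_cases h : v.2 < occCount φ v.1
      · exact ⟨h, by omega⟩
      · rw [if_neg h] at this; omega
    · simp only [hB, List.mem_map, List.mem_flatten, List.mem_flatMap] at hv
      obtain ⟨l, ⟨c, ⟨z, hz, hc⟩, hl⟩, rfl⟩ := hv
      have hvz := cycle_vars z (occCount φ z) l.1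
        (List.mem_map_of_mem (List.mem_flatten.2 ⟨c, hc, hl⟩))
      have hocc : 0 < occCount φ z := (mem_dedup_iff_occ φ z).1 hz
      rw [hvz.1]
      have hmax := hvz.2
      rw [Nat.max_eq_left hocc] at hmax
      exact ⟨hmax, hocc⟩
  have htv : tovey φ = A ++ B := rfl
  constructor
  · constructor
    · rintro ⟨σ', hs⟩
      rw [htv, satisfies_append] at hs
      obtain ⟨hsA, hsB⟩ := hs
      refine ⟨fun z => σ' (z, 0), ?_⟩
      have hagree : ∀ v ∈ A.flatten.map Prod.fst, σ' v = σ' (v.1, 0) := by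
        intro v hvA
        have hv2 := hvars v (by rw [hvarsplit]; exact List.mem_append.2 (Or.inl hvA))
        have hz : v.1 ∈ (φ.flatten.map Prod.fst).dedup := (mem_dedup_iff_occ _ _).2 hv2.2
        have hcyc : Satisfies σ' (cycleClauses v.1 (occCount φ v.1)) :=
          fun c hc => hsB c (List.mem_flatMap.2 ⟨v.1, hz, hc⟩)
        exact cycle_forces σ' v.1 _ hcyc v.2 hv2.1
      have hsA' : Satisfies (fun v => σ' (v.1, 0)) A := satisfies_congr A hagree hsA
      exact (renameCNF_sat φ _ (fun v => σ' (v.1, 0)) (fun z => σ' (z, 0))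
        (fun z j => rfl)).1 hsA'
    · rintro ⟨τ, hτ⟩
      refine ⟨fun v => τ v.1, ?_⟩
      rw [htv, satisfies_append]
      refine ⟨(renameCNF_sat φ _ (fun v => τ v.1) τ (fun z j => rfl)).2 hτ, ?_⟩
      intro c hc
      obtain ⟨z, hz, hcz⟩ := List.mem_flatMap.1 hc
      exact cycle_sat (fun v => τ v.1) τ (fun z j => rfl) z _ c hcz
  · intro v hv
    obtain ⟨h1, h2⟩ := hvars v hv
    rw [occCount', hvarsplit, List.count_append, hcountA, if_pos h1, hcountB,
      if_pos ((mem_dedup_iff_occ φ v.1).2 h2), cycle_count v.1 _ h2 v.2 h1]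
end

section
/- Fix n ≥ 1 and ε with 0 < ε < 1/6, and let N ≥ n/ε². Model the rank-4 scheduling instance abstractly: there is a finite set of machines (one per match of a 3DM′ instance) and jobs (element jobs for X ∪ Y and dummy jobs for W), such that (a) each w- or w̄-job has processing time exactly 2 on machines whose match contains that element and processing time at least 1/(2ε) elsewhere; (b) each s-, s′-, a-, or b-job has processing time at least 1 on every machine, at most 1 + Cε (for a universal constant C) on machines whose match contains the element, and at least 1/(2ε) on all other machines. If the 3DM′ instance admits a perfect matching, then there is an assignment of all jobs to machines in which every machine has total load at most 2 + 2Cε. -/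
/-- An element is incident to a match (triple) if it is one of its coordinates. -/
def Incident {α : Type} (e : α) (t : α × α × α) : Prop :=
  e = t.1 ∨ e = t.2.1 ∨ e = t.2.2

instance {α : Type} [DecidableEq α] (e : α) (t : α × α × α) :
    Decidable (Incident e t) := by unfold Incident; infer_instance

/-- The degree d(e): the number of matches of `T` containing the element `e`. -/
def deg {α : Type} [DecidableEq α] (T : Finset (α × α × α)) (e : α) : ℕ :=
  (T.filter fun t => Incident e t).card

/-- The jobs of the scheduling instance: one element job per element of X ∪ Y,
and d(w) − 1 dummy jobs per element w of W. -/
abbrev SchedJobs {α : Type} [DecidableEq α] (W X Y : Finset α)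
    (T : Finset (α × α × α)) :=
  {e : α // e ∈ X ∪ Y} ⊕ (Σ w : {w : α // w ∈ W}, Fin (deg T w.1 - 1))

/-- Completeness of the rank-4 reduction: with the stated processing-time
structure, a perfect matching of the 3DM′ instance yields a schedule in which
every machine has load at most 2 + 2Cε. -/
theorem rank4_completeness {α : Type} [DecidableEq α] [Fintype α]
    (n : ℕ) (hn : 1 ≤ n) (ε C N : ℝ) (hε : 0 < ε) (hε6 : ε < 1 / 6) (hC : 0 ≤ C)
    (hN : (n : ℝ) / ε ^ 2 ≤ N)
    (W X Y : Finset α)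
    (hWX : Disjoint W X) (hWY : Disjoint W Y) (hXY : Disjoint X Y)
    (hWc : W.card = 6 * n) (hXc : X.card = 6 * n) (hYc : Y.card = 6 * n)
    (T : Finset (α × α × α))
    (hT : ∀ t ∈ T, t.1 ∈ W ∧ t.2.1 ∈ X ∧ t.2.2 ∈ Y)
    (p : SchedJobs W X Y T → {t // t ∈ T} → ℝ)
    (hdummy : ∀ (w : {w : α // w ∈ W}) (i : Fin (deg T w.1 - 1)) (t : {t // t ∈ T}),
      (Incident w.1 t.1 → p (Sum.inr ⟨w, i⟩) t = 2) ∧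
      (¬ Incident w.1 t.1 → 1 / (2 * ε) ≤ p (Sum.inr ⟨w, i⟩) t))
    (helem : ∀ (e : {e : α // e ∈ X ∪ Y}) (t : {t // t ∈ T}),
      1 ≤ p (Sum.inl e) t ∧
      (Incident e.1 t.1 → p (Sum.inl e) t ≤ 1 + C * ε) ∧
      (¬ Incident e.1 t.1 → 1 / (2 * ε) ≤ p (Sum.inl e) t))
    (hpm : ∃ T' ⊆ T, ∀ e ∈ W ∪ X ∪ Y, ∃! t, t ∈ T' ∧ Incident e t) :
    ∃ A : SchedJobs W X Y T → {t // t ∈ T},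
      ∀ t : {t // t ∈ T},
        (∑ j, if A j = t then p j t else 0) ≤ 2 + 2 * C * ε := by

  classical
  obtain ⟨T', hsub, huniq⟩ := hpm
  have hmemXY : ∀ {e : α}, e ∈ X ∪ Y → e ∈ W ∪ X ∪ Y := by
    intro e he
    rw [Finset.union_assoc]
    exact Finset.mem_union_right _ he
  have hmemW : ∀ {w : α}, w ∈ W → w ∈ W ∪ X ∪ Y := fun h =>
    Finset.mem_union_left _ (Finset.mem_union_left _ h)
  choose M hM hMuniq using huniq
  have hIncW : ∀ w ∈ W, ∀ t ∈ T, (Incident w t ↔ w = t.1) := by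
    intro w hw t ht
    constructor
    · rintro (rfl | rfl | rfl)
      · rfl
      · exact absurd (hT t ht).2.1 (Finset.disjoint_left.1 hWX hw)
      · exact absurd (hT t ht).2.2 (Finset.disjoint_left.1 hWY hw)
    · exact fun h => Or.inl h
  have hMfilt : ∀ w (hw : w ∈ W),
      M w (hmemW hw) ∈ T.filter (fun t => Incident w t) :=
    fun w hw => Finset.mem_filter.2 ⟨hsub (hM w (hmemW hw)).1, (hM w (hmemW hw)).2⟩
  have hcard : ∀ (w : α) (hw : w ∈ W),
      ((T.filter fun t => Incident w t).erase (M w (hmemW hw))).card = deg T w - 1 := by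
    intro w hw
    rw [Finset.card_erase_of_mem (hMfilt w hw)]
    rfl
  set S : {w : α // w ∈ W} → Finset (α × α × α) := fun w =>
    (T.filter fun t => Incident w.1 t).erase (M w.1 (hmemW w.2)) with hS
  set D : ∀ w : {w : α // w ∈ W}, Fin (deg T w.1 - 1) → α × α × α := fun w i =>
    ((S w).equivFin.symm (Fin.cast (hcard w.1 w.2).symm i)).1 with hD
  have hDS : ∀ w i, D w i ∈ S w := fun w i => ((S w).equivFin.symm _).2
  have hDT : ∀ w i, D w i ∈ T := fun w i =>
    (Finset.mem_filter.1 (Finset.mem_of_mem_erase (hDS w i))).1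
  have hDInc : ∀ w i, Incident w.1 (D w i) :=
    fun w i => (Finset.mem_filter.1 (Finset.mem_of_mem_erase (hDS w i))).2
  have hDne : ∀ w i, D w i ≠ M w.1 (hmemW w.2) :=
    fun w i => Finset.ne_of_mem_erase (hDS w i)
  have hDinj : ∀ w, Function.Injective (D w) := by
    intro w i j h
    have h2 := (S w).equivFin.symm.injective (Subtype.ext h)
    have h3 : (i : ℕ) = (j : ℕ) := by
      simpa using congrArg Fin.val h2
    exact Fin.ext h3
  have hDnotT' : ∀ w i, D w i ∉ T' := by
    intro w i hmem
    exact hDne w i (hMuniq w.1 (hmemW w.2) _ ⟨hmem, hDInc w i⟩)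
  have hD1 : ∀ w i, (D w i).1 = w.1 := fun w i =>
    ((hIncW w.1 w.2 _ (hDT w i)).1 (hDInc w i)).symm
  set A : SchedJobs W X Y T → {t // t ∈ T} := fun j =>
    match j with
    | Sum.inl e => ⟨M e.1 (hmemXY e.2), hsub (hM e.1 (hmemXY e.2)).1⟩
    | Sum.inr ⟨w, i⟩ => ⟨D w i, hDT w i⟩ with hA
  have hCε : 0 ≤ C * ε := mul_nonneg hC hε.le
  refine ⟨A, ?_⟩
  intro t
  by_cases ht' : t.1 ∈ T'
  · -- machine in T' : gets the two element jobs
    have mem1 : t.1.2.1 ∈ X ∪ Y := Finset.mem_union_left _ (hT t.1 t.2).2.1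
    have mem2 : t.1.2.2 ∈ X ∪ Y := Finset.mem_union_right _ (hT t.1 t.2).2.2
    set j1 : SchedJobs W X Y T := Sum.inl ⟨t.1.2.1, mem1⟩ with hj1
    set j2 : SchedJobs W X Y T := Sum.inl ⟨t.1.2.2, mem2⟩ with hj2
    have hne : j1 ≠ j2 := by
      intro h
      have h' : t.1.2.1 = t.1.2.2 := by
        have := Sum.inl.inj h
        exact congrArg Subtype.val this
      exact Finset.disjoint_left.1 hXY (hT t.1 t.2).2.1 (h' ▸ (hT t.1 t.2).2.2)
    have hfib : ∀ j, A j = t → j = j1 ∨ j = j2 := by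
      intro j hj
      match j with
      | Sum.inr ⟨w, i⟩ =>
        exfalso
        have hDeq : D w i = t.1 := congrArg Subtype.val hj
        exact hDnotT' w i (by rw [hDeq]; exact ht')
      | Sum.inl e =>
        have hMeq : M e.1 (hmemXY e.2) = t.1 := congrArg Subtype.val hj
        have hinc : Incident e.1 t.1 := by
          rw [← hMeq]; exact (hM e.1 (hmemXY e.2)).2
        rcases hinc with h | h | h
        · exfalso
          have hWe : e.1 ∈ W := by rw [h]; exact (hT t.1 t.2).1
          rcases Finset.mem_union.1 e.2 with hx | hy
          · exact Finset.disjoint_left.1 hWX hWe hx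
          · exact Finset.disjoint_left.1 hWY hWe hy
        · exact Or.inl (congrArg Sum.inl (Subtype.ext h))
        · exact Or.inr (congrArg Sum.inl (Subtype.ext h))
    have hsum : (∑ j, if A j = t then p j t else 0)
        = ∑ j ∈ ({j1, j2} : Finset (SchedJobs W X Y T)),
            (if A j = t then p j t else 0) := by
      refine (Finset.sum_subset (Finset.subset_univ _) ?_).symm
      intro j _ hj
      by_cases h : A j = t
      · rcases hfib j h with rfl | rfl <;> simp at hj
      · rw [if_neg h]
    rw [hsum, Finset.sum_pair hne]
    have b1 : (if A j1 = t then p j1 t else 0) ≤ 1 + C * ε := by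
      split
      · exact (helem ⟨t.1.2.1, mem1⟩ t).2.1 (Or.inr (Or.inl rfl))
      · linarith
    have b2 : (if A j2 = t then p j2 t else 0) ≤ 1 + C * ε := by
      split
      · exact (helem ⟨t.1.2.2, mem2⟩ t).2.1 (Or.inr (Or.inr rfl))
      · linarith
    linarith
  · -- machine not in T' : gets at most one dummy job
    have huniqfib : ∀ j j', A j = t → A j' = t → j = j' := by
      intro j j' hj hj'
      match j, j' with
      | Sum.inl e, _ =>
        exfalso
        have hMeq : M e.1 (hmemXY e.2) = t.1 := congrArg Subtype.val hj
        exact ht' (by rw [← hMeq]; exact (hM e.1 (hmemXY e.2)).1)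
      | Sum.inr _, Sum.inl e =>
        exfalso
        have hMeq : M e.1 (hmemXY e.2) = t.1 := congrArg Subtype.val hj'
        exact ht' (by rw [← hMeq]; exact (hM e.1 (hmemXY e.2)).1)
      | Sum.inr ⟨w, i⟩, Sum.inr ⟨w', i'⟩ =>
        have h1 : D w i = t.1 := congrArg Subtype.val hj
        have h2 : D w' i' = t.1 := congrArg Subtype.val hj'
        have hww : w = w' := Subtype.ext (by rw [← hD1 w i, ← hD1 w' i', h1, h2])
        subst hww
        have hii : i = i' := hDinj w (h1.trans h2.symm)
        rw [hii]
    by_cases hex : ∃ j, A j = t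
    · obtain ⟨j0, hj0⟩ := hex
      have hsum : (∑ j, if A j = t then p j t else 0)
          = ∑ j ∈ ({j0} : Finset (SchedJobs W X Y T)),
              (if A j = t then p j t else 0) := by
        refine (Finset.sum_subset (Finset.subset_univ _) ?_).symm
        intro j _ hj
        by_cases h : A j = t
        · exact absurd (Finset.mem_singleton.2 (huniqfib j j0 h hj0)) hj
        · rw [if_neg h]
      rw [hsum, Finset.sum_singleton, if_pos hj0]
      match j0, hj0 with
      | Sum.inl e, hj0 =>
        exfalso
        have hMeq : M e.1 (hmemXY e.2) = t.1 := congrArg Subtype.val hj0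
        exact ht' (by rw [← hMeq]; exact (hM e.1 (hmemXY e.2)).1)
      | Sum.inr ⟨w, i⟩, hj0 =>
        have hDeq : D w i = t.1 := congrArg Subtype.val hj0
        have hinc : Incident w.1 t.1 := by rw [← hDeq]; exact hDInc w i
        rw [(hdummy w i t).1 hinc]
        linarith
    · rw [Finset.sum_eq_zero]
      · linarith
      · intro j _
        exact if_neg (fun h => hex ⟨j, h⟩)
end

section
/- Under the same abstract processing-time assumptions as in the completeness direction (w/w̄-jobs have time 2 on incident machines and ≥ 1/(2ε) > 3 elsewhere; element jobs of X ∪ Y have time ≥ 1 everywhere and ≥ 1/(2ε) on non-incident machines; there are d(w)−1 dummy jobs per element w of W, where d(w) is the number of matches containing w), if there is an assignment of all jobs to machines with every machine's load strictly less than 3, then the set of matches corresponding to machines carrying no w- or w̄-job is a perfect matching of the 3DM′ instance. -/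
/-- Soundness of the rank-4 reduction: with the stated processing-time
structure, a schedule with every machine load strictly less than 3 yields a
perfect matching, namely the matches of the machines carrying no w/w̄-job. -/
theorem rank4_soundness {α : Type} [DecidableEq α] [Fintype α]
    (n : ℕ) (hn : 1 ≤ n) (ε : ℝ) (hε : 0 < ε) (hε6 : ε < 1 / 6)
    (W X Y : Finset α)
    (hWX : Disjoint W X) (hWY : Disjoint W Y) (hXY : Disjoint X Y)
    (hWc : W.card = 6 * n) (hXc : X.card = 6 * n) (hYc : Y.card = 6 * n)
    (T : Finset (α × α × α))
    (hT : ∀ t ∈ T, t.1 ∈ W ∧ t.2.1 ∈ X ∧ t.2.2 ∈ Y)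
    (p : SchedJobs W X Y T → {t // t ∈ T} → ℝ)
    (hdummy : ∀ (w : {w : α // w ∈ W}) (i : Fin (deg T w.1 - 1)) (t : {t // t ∈ T}),
      (Incident w.1 t.1 → p (Sum.inr ⟨w, i⟩) t = 2) ∧
      (¬ Incident w.1 t.1 → 1 / (2 * ε) ≤ p (Sum.inr ⟨w, i⟩) t))
    (helem : ∀ (e : {e : α // e ∈ X ∪ Y}) (t : {t // t ∈ T}),
      1 ≤ p (Sum.inl e) t ∧
      (¬ Incident e.1 t.1 → 1 / (2 * ε) ≤ p (Sum.inl e) t))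
    (A : SchedJobs W X Y T → {t // t ∈ T})
    (hload : ∀ t : {t // t ∈ T},
      (∑ j, if A j = t then p j t else 0) < 3) :
    ∀ e ∈ W ∪ X ∪ Y, ∃! t : {t // t ∈ T},
      (∀ (w : {w : α // w ∈ W}) (i : Fin (deg T w.1 - 1)),
        A (Sum.inr ⟨w, i⟩) ≠ t) ∧ Incident e t.1 := by
  classical
  have h3 : (3:ℝ) < 1 / (2*ε) := by
    rw [lt_div_iff₀ (by positivity)]; nlinarith
  have hp1 : ∀ (j : SchedJobs W X Y T) (t : {t // t ∈ T}), (1:ℝ) ≤ p j t := by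
    rintro (e | ⟨w, i⟩) t
    · exact (helem e t).1
    · by_cases h : Incident w.1 t.1
      · rw [(hdummy w i t).1 h]; norm_num
      · linarith [(hdummy w i t).2 h]
  have hassign : ∀ j : SchedJobs W X Y T, p j (A j) < 3 := by
    intro j
    refine lt_of_le_of_lt ?_ (hload (A j))
    have h := Finset.single_le_sum (f := fun j' => if A j' = A j then p j' (A j) else 0)
      (fun i _ => by split_ifs with h
                     · linarith [hp1 i (A j)]
                     · exact le_rfl)
      (Finset.mem_univ j)
    simpa using h
  have hpair : ∀ j j' : SchedJobs W X Y T, j ≠ j' → A j = A j' →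
      p j (A j) + p j' (A j) < 3 := by
    intro j j' hne hAA
    refine lt_of_le_of_lt ?_ (hload (A j))
    have h := Finset.sum_le_sum_of_subset_of_nonneg
      (f := fun j'' => if A j'' = A j then p j'' (A j) else 0)
      (Finset.subset_univ ({j, j'} : Finset _))
      (fun i _ _ => by split_ifs with h
                       · linarith [hp1 i (A j)]
                       · exact le_rfl)
    rw [Finset.sum_pair hne, if_pos rfl, if_pos hAA.symm] at h
    exact h
  have htriple : ∀ j1 j2 j3 : SchedJobs W X Y T, j1 ≠ j2 → j1 ≠ j3 → j2 ≠ j3 →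
      A j2 = A j1 → A j3 = A j1 → False := by
    intro j1 j2 j3 h12 h13 h23 hA2 hA3
    have hs := Finset.sum_le_sum_of_subset_of_nonneg
      (f := fun j'' => if A j'' = A j1 then p j'' (A j1) else 0)
      (Finset.subset_univ ({j1, j2, j3} : Finset _))
      (fun i _ _ => by split_ifs with h
                       · linarith [hp1 i (A j1)]
                       · exact le_rfl)
    rw [Finset.sum_insert (by simp [h12, h13]), Finset.sum_pair h23,
      if_pos rfl, if_pos hA2, if_pos hA3] at hs
    have hl := hload (A j1)
    have l1 := hp1 j1 (A j1); have l2 := hp1 j2 (A j1); have l3 := hp1 j3 (A j1)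
    linarith
  have hincE : ∀ e : {e : α // e ∈ X ∪ Y}, Incident e.1 (A (Sum.inl e)).1 := by
    intro e; by_contra h
    linarith [(helem e (A (Sum.inl e))).2 h, hassign (Sum.inl e)]
  have hincD : ∀ (w : {w : α // w ∈ W}) (i : Fin (deg T w.1 - 1)),
      Incident w.1 (A (Sum.inr ⟨w, i⟩)).1 := by
    intro w i; by_contra h
    linarith [(hdummy w i (A (Sum.inr ⟨w, i⟩))).2 h, hassign (Sum.inr ⟨w, i⟩)]
  have hexcl : ∀ (w : {w : α // w ∈ W}) (i : Fin (deg T w.1 - 1)) (j : SchedJobs W X Y T),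
      j ≠ Sum.inr ⟨w, i⟩ → A j ≠ A (Sum.inr ⟨w, i⟩) := by
    intro w i j hne hAA
    have h2 : p (Sum.inr ⟨w, i⟩) (A (Sum.inr ⟨w, i⟩)) = 2 := (hdummy w i _).1 (hincD w i)
    have hlt := hpair (Sum.inr ⟨w, i⟩) j (fun h => hne h.symm) hAA.symm
    have := hp1 j (A (Sum.inr ⟨w, i⟩))
    rw [h2] at hlt; linarith
  -- incidence characterizations
  have hWincRaw : ∀ wv ∈ W, ∀ t ∈ T, (Incident wv t ↔ t.1 = wv) := by
    intro wv hw t ht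
    obtain ⟨h1, h2, h3⟩ := hT t ht
    constructor
    · rintro (h | h | h)
      · exact h.symm
      · exact absurd (show wv ∈ X by rw [h]; exact h2) (Finset.disjoint_left.1 hWX hw)
      · exact absurd (show wv ∈ Y by rw [h]; exact h3) (Finset.disjoint_left.1 hWY hw)
    · intro h; exact Or.inl h.symm
  have hWincS : ∀ wv ∈ W, ∀ t : {t // t ∈ T}, (Incident wv t.1 ↔ t.1.1 = wv) :=
    fun wv hw t => hWincRaw wv hw t.1 t.2
  have hXinc : ∀ ev ∈ X, ∀ t : {t // t ∈ T}, Incident ev t.1 → ev = t.1.2.1 := by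
    intro ev he t hi
    obtain ⟨h1, h2, h3⟩ := hT t.1 t.2
    rcases hi with h | h | h
    · exact absurd (show ev ∈ W by rw [h]; exact h1)
        (fun hh => Finset.disjoint_left.1 hWX hh he)
    · exact h
    · exact absurd (show ev ∈ Y by rw [h]; exact h3)
        (fun hh => Finset.disjoint_left.1 hXY he hh)
  have hYinc : ∀ ev ∈ Y, ∀ t : {t // t ∈ T}, Incident ev t.1 → ev = t.1.2.2 := by
    intro ev he t hi
    obtain ⟨h1, h2, h3⟩ := hT t.1 t.2
    rcases hi with h | h | h
    · exact absurd (show ev ∈ W by rw [h]; exact h1)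
        (fun hh => Finset.disjoint_left.1 hWY hh he)
    · exact absurd (show ev ∈ X by rw [h]; exact h2)
        (fun hh => Finset.disjoint_left.1 hXY hh he)
    · exact h
  -- the dummy-free machines
  set M : Finset {t // t ∈ T} := Finset.univ.filter
    (fun t => ∀ (w : {w : α // w ∈ W}) (i : Fin (deg T w.1 - 1)),
      A (Sum.inr ⟨w, i⟩) ≠ t) with hMdef
  have hginj : Function.Injective
      (fun j : Σ w : {w : α // w ∈ W}, Fin (deg T w.1 - 1) => A (Sum.inr j)) := by
    intro j j' h
    by_contra hne
    exact hexcl j'.1 j'.2 (Sum.inr j) (fun hh => hne (Sum.inr_injective hh)) h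
  have hMcompl : Finset.univ \ M = Finset.univ.image
      (fun j : Σ w : {w : α // w ∈ W}, Fin (deg T w.1 - 1) => A (Sum.inr j)) := by
    ext t
    simp only [Finset.mem_sdiff, Finset.mem_univ, true_and, Finset.mem_image, hMdef,
      Finset.mem_filter]
    constructor
    · intro h
      push_neg at h
      obtain ⟨w, i, hwi⟩ := h
      exact ⟨⟨w, i⟩, hwi⟩
    · rintro ⟨⟨w, i⟩, h⟩ hall
      exact hall w i h
  have hTcard : (Finset.univ : Finset {t // t ∈ T}).card = T.card := by
    simp [Fintype.card_coe]
  have hcard1 : M.card + (∑ w ∈ W, (deg T w - 1)) = T.card := by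
    have h1 : (Finset.univ \ M).card = ∑ w ∈ W, (deg T w - 1) := by
      rw [hMcompl, Finset.card_image_of_injective _ hginj, Finset.card_univ,
        Fintype.card_sigma]
      simp only [Fintype.card_fin]
      rw [Finset.univ_eq_attach]
      exact Finset.sum_attach W (fun w => deg T w - 1)
    have h2 : (Finset.univ \ M).card = T.card - M.card := by
      rw [Finset.card_sdiff_of_subset (Finset.subset_univ M), hTcard]
    have h3 : M.card ≤ T.card := by
      rw [← hTcard]; exact Finset.card_le_card (Finset.subset_univ M)
    omega
  have hdegsum : ∑ w ∈ W, deg T w = T.card := by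
    rw [Finset.card_eq_sum_card_fiberwise (fun t ht => (hT t ht).1)]
    refine Finset.sum_congr rfl (fun w hw => ?_)
    unfold deg
    congr 1
    exact Finset.filter_congr (fun t ht => by simpa using hWincRaw w hw t ht)
  have hcardXY : Fintype.card {e : α // e ∈ X ∪ Y} = 12 * n := by
    rw [Fintype.card_coe, Finset.card_union_of_disjoint hXY, hXc, hYc]; ring
  have hElemM : ∀ e : {e : α // e ∈ X ∪ Y}, A (Sum.inl e) ∈ M := by
    intro e
    rw [hMdef, Finset.mem_filter]
    exact ⟨Finset.mem_univ _, fun w i h => hexcl w i (Sum.inl e) (by simp) h.symm⟩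
  have hfib2 : ∀ t : {t // t ∈ T},
      (Finset.univ.filter fun e : {e : α // e ∈ X ∪ Y} => A (Sum.inl e) = t).card ≤ 2 := by
    intro t
    by_contra h
    push_neg at h
    rw [Finset.two_lt_card_iff] at h
    obtain ⟨a, b, c, ha, hb, hc, hab, hac, hbc⟩ := h
    rw [Finset.mem_filter] at ha hb hc
    exact htriple (Sum.inl a) (Sum.inl b) (Sum.inl c)
      (fun h => hab (Sum.inl_injective h)) (fun h => hac (Sum.inl_injective h))
      (fun h => hbc (Sum.inl_injective h))
      (hb.2.trans ha.2.symm) (hc.2.trans ha.2.symm)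
  have h12n : 12 * n ≤ 2 * M.card := by
    have h := Finset.card_le_mul_card_image_of_maps_to
      (f := fun e : {e : α // e ∈ X ∪ Y} => A (Sum.inl e))
      (fun e _ => hElemM e) 2 (fun t _ => hfib2 t)
    rwa [Finset.card_univ, hcardXY] at h
  have hM6 : M.card = 6 * n := by
    have hge : T.card ≤ (∑ w ∈ W, (deg T w - 1)) + 6 * n := by
      have h := Finset.sum_le_sum (s := W)
        (f := fun w => deg T w) (g := fun w => (deg T w - 1) + 1) (fun w _ => by beta_reduce; omega)
      rw [hdegsum, Finset.sum_add_distrib, Finset.sum_const, smul_eq_mul, mul_one, hWc] at h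
      exact h
    omega
  have hdegpos : ∀ w ∈ W, 1 ≤ deg T w := by
    by_contra h
    push_neg at h
    obtain ⟨w0, hw0, hd0⟩ := h
    have hlt : ∑ w ∈ W, deg T w < ∑ w ∈ W, ((deg T w - 1) + 1) :=
      Finset.sum_lt_sum (fun w _ => by beta_reduce; omega) ⟨w0, hw0, by beta_reduce; omega⟩
    rw [hdegsum, Finset.sum_add_distrib, Finset.sum_const, smul_eq_mul, mul_one, hWc] at hlt
    omega
  have hfibsum : ∑ t ∈ M,
      (Finset.univ.filter fun e : {e : α // e ∈ X ∪ Y} => A (Sum.inl e) = t).card = 12 * n := by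
    rw [← hcardXY, ← Finset.card_univ]
    exact (Finset.card_eq_sum_card_fiberwise (fun e _ => hElemM e)).symm
  have hfib_eq2 : ∀ t ∈ M,
      (Finset.univ.filter fun e : {e : α // e ∈ X ∪ Y} => A (Sum.inl e) = t).card = 2 := by
    by_contra h
    push_neg at h
    obtain ⟨t0, ht0, hne⟩ := h
    have hlt := Finset.sum_lt_sum (s := M)
      (f := fun t => (Finset.univ.filter fun e : {e : α // e ∈ X ∪ Y} =>
        A (Sum.inl e) = t).card)
      (g := fun _ => 2) (fun t _ => hfib2 t) ⟨t0, ht0, lt_of_le_of_ne (hfib2 t0) hne⟩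
    rw [hfibsum, Finset.sum_const, smul_eq_mul] at hlt
    omega
  have hcover : ∀ t ∈ M,
      (∃ ex : {e : α // e ∈ X ∪ Y}, ex.1 = t.1.2.1 ∧ A (Sum.inl ex) = t) ∧
      (∃ ey : {e : α // e ∈ X ∪ Y}, ey.1 = t.1.2.2 ∧ A (Sum.inl ey) = t) := by
    intro t ht
    obtain ⟨h1, h2, h3⟩ := hT t.1 t.2
    obtain ⟨a, b, hab, hset⟩ := Finset.card_eq_two.1 (hfib_eq2 t ht)
    have ha : A (Sum.inl a) = t := by
      have : a ∈ Finset.univ.filter fun e : {e : α // e ∈ X ∪ Y} => A (Sum.inl e) = t := by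
        rw [hset]; simp
      exact (Finset.mem_filter.1 this).2
    have hb : A (Sum.inl b) = t := by
      have : b ∈ Finset.univ.filter fun e : {e : α // e ∈ X ∪ Y} => A (Sum.inl e) = t := by
        rw [hset]; simp
      exact (Finset.mem_filter.1 this).2
    have key : ∀ c : {e : α // e ∈ X ∪ Y}, A (Sum.inl c) = t →
        c.1 = t.1.2.1 ∨ c.1 = t.1.2.2 := by
      intro c hc
      have hic := hincE c
      rw [hc] at hic
      rcases hic with h | h | h
      · exfalso
        have hcW : c.1 ∈ W := by rw [h]; exact h1
        rcases Finset.mem_union.1 c.2 with hcx | hcy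
        · exact Finset.disjoint_left.1 hWX hcW hcx
        · exact Finset.disjoint_left.1 hWY hcW hcy
      · exact Or.inl h
      · exact Or.inr h
    have hab1 : a.1 ≠ b.1 := fun h => hab (Subtype.ext h)
    rcases key a ha with haX | haY <;> rcases key b hb with hbX | hbY
    · exact absurd (haX.trans hbX.symm) hab1
    · exact ⟨⟨a, haX, ha⟩, ⟨b, hbY, hb⟩⟩
    · exact ⟨⟨b, hbX, hb⟩, ⟨a, haY, ha⟩⟩
    · exact absurd (haY.trans hbY.symm) hab1
  intro e he
  rcases Finset.mem_union.1 he with he' | heY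
  · rcases Finset.mem_union.1 he' with heW | heX
    · -- e ∈ W
      set w : {w : α // w ∈ W} := ⟨e, heW⟩ with hwdef
      set Iw : Finset {t // t ∈ T} := Finset.univ.filter (fun t => t.1.1 = e) with hIw
      have hIwcard : Iw.card = deg T e := by
        have h1 : deg T e = (T.filter fun t => t.1 = e).card := by
          unfold deg
          congr 1
          exact Finset.filter_congr (fun t ht => by simpa using hWincRaw e heW t ht)
        rw [h1]
        apply Finset.card_bij (fun (t : {t // t ∈ T}) _ => t.1)
        · intro a ha
          rw [Finset.mem_filter]
          exact ⟨a.2, (Finset.mem_filter.1 ha).2⟩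
        · intro a _ b _ h
          exact Subtype.ext h
        · intro b hb
          rw [Finset.mem_filter] at hb
          exact ⟨⟨b, hb.1⟩, Finset.mem_filter.2 ⟨Finset.mem_univ _, hb.2⟩, rfl⟩
      have hginjw : Function.Injective
          (fun i : Fin (deg T w.1 - 1) => A (Sum.inr ⟨w, i⟩)) := by
        intro i i' h
        by_contra hne
        refine hexcl w i' (Sum.inr ⟨w, i⟩) (fun hh => hne ?_) h
        simpa using Sum.inr_injective hh
      have hsplit : Iw.filter (fun t => t ∉ M) =
          Finset.univ.image (fun i : Fin (deg T w.1 - 1) => A (Sum.inr ⟨w, i⟩)) := by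
        ext t
        simp only [Finset.mem_filter, Finset.mem_image, Finset.mem_univ, true_and]
        constructor
        · rintro ⟨htIw, htM⟩
          rw [hMdef, Finset.mem_filter] at htM
          push_neg at htM
          obtain ⟨w', i', hwi⟩ := htM (Finset.mem_univ t)
          have hinc' := hincD w' i'
          rw [hwi] at hinc'
          have hw'1 : w'.1 = e := by
            have := (hWincS w'.1 w'.2 t).1 hinc'
            rw [hIw, Finset.mem_filter] at htIw
            rw [← this, htIw.2]
          have hww : w' = w := Subtype.ext hw'1
          subst hww
          exact ⟨i', hwi⟩
        · rintro ⟨i, hi⟩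
          constructor
          · rw [hIw, Finset.mem_filter]
            refine ⟨Finset.mem_univ _, ?_⟩
            rw [← hi]
            exact (hWincS e heW _).1 (hincD w i)
          · intro htM
            rw [hMdef, Finset.mem_filter] at htM
            exact htM.2 w i hi
      have hcard_dummy : (Iw.filter (fun t => t ∉ M)).card = deg T e - 1 := by
        rw [hsplit, Finset.card_image_of_injective _ hginjw, Finset.card_univ,
          Fintype.card_fin]
      have hone : (Iw.filter (fun t => t ∈ M)).card = 1 := by
        have hpn := Finset.card_filter_add_card_filter_not
          (s := Iw) (p := fun t => t ∈ M)
        rw [hIwcard] at hpn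
        have := hdegpos e heW
        omega
      obtain ⟨t0, ht0⟩ := Finset.card_eq_one.1 hone
      have ht0mem : t0 ∈ Iw.filter (fun t => t ∈ M) := by
        rw [ht0]; exact Finset.mem_singleton_self t0
      rw [Finset.mem_filter] at ht0mem
      obtain ⟨ht0Iw, ht0M⟩ := ht0mem
      refine ⟨t0, ⟨?_, ?_⟩, ?_⟩
      · rw [hMdef, Finset.mem_filter] at ht0M
        exact ht0M.2
      · exact Or.inl ((Finset.mem_filter.1 ht0Iw).2).symm
      · rintro t ⟨hnd, hinc⟩
        have htM : t ∈ M := by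
          rw [hMdef, Finset.mem_filter]
          exact ⟨Finset.mem_univ _, hnd⟩
        have htIw : t ∈ Iw :=
          Finset.mem_filter.2 ⟨Finset.mem_univ _, (hWincS e heW t).1 hinc⟩
        have : t ∈ Iw.filter (fun t => t ∈ M) := Finset.mem_filter.2 ⟨htIw, htM⟩
        rw [ht0] at this
        exact Finset.mem_singleton.1 this
    · -- e ∈ X
      have heXY' : e ∈ X ∪ Y := Finset.mem_union_left _ heX
      refine ⟨A (Sum.inl ⟨e, heXY'⟩), ⟨?_, hincE ⟨e, heXY'⟩⟩, ?_⟩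
      · have := hElemM ⟨e, heXY'⟩
        rw [hMdef, Finset.mem_filter] at this
        exact this.2
      · rintro t ⟨hnd, hinc⟩
        have htM : t ∈ M := by
          rw [hMdef, Finset.mem_filter]
          exact ⟨Finset.mem_univ _, hnd⟩
        obtain ⟨⟨ex, hex1, hex2⟩, -⟩ := hcover t htM
        have hexe : ex = ⟨e, heXY'⟩ :=
          Subtype.ext (hex1.trans (hXinc e heX t hinc).symm)
        rw [hexe] at hex2
        exact hex2.symm
  · -- e ∈ Y
    have heXY' : e ∈ X ∪ Y := Finset.mem_union_right _ heY
    refine ⟨A (Sum.inl ⟨e, heXY'⟩), ⟨?_, hincE ⟨e, heXY'⟩⟩, ?_⟩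
    · have := hElemM ⟨e, heXY'⟩
      rw [hMdef, Finset.mem_filter] at this
      exact this.2
    · rintro t ⟨hnd, hinc⟩
      have htM : t ∈ M := by
        rw [hMdef, Finset.mem_filter]
        exact ⟨Finset.mem_univ _, hnd⟩
      obtain ⟨-, ⟨ey, hey1, hey2⟩⟩ := hcover t htM
      have heye : ey = ⟨e, heXY'⟩ :=
        Subtype.ext (hey1.trans (hYinc e heY t hinc).symm)
      rw [heye] at hey2
      exact hey2.symm
end
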